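/- Let C be a regular, irreducible curve that is projective over a field k, with function field F = k(C), arithmetic genus t, and a k-rational point O. If f in F^* has the support of its divisor contained in C_{≤t}, then f lies in the subgroup of F^* generated by the nonzero elements of RR_{3t}. -/

import Mathlib

open scoped TensorProduct

noncomputable section

/-- The set of Steinberg relations in `Fˣ ⊗_ℤ Fˣ` (written additively):
the elements `a ⊗ b` with `a + b = 1` in `F`. -/
def SteinbergSet (F : Type*) [Field F] :
    Set (TensorProduct ℤ (Additive Fˣ) (Additive Fˣ)) :=
  { x | ∃ a b : Fˣ, (a : F) + (b : F) = 1 ∧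
      x = Additive.ofMul a ⊗ₜ[ℤ] Additive.ofMul b }

/-- Milnor's `K₂` of a field, via Matsumoto's presentation. -/
abbrev K2 (F : Type*) [Field F] :=
  (TensorProduct ℤ (Additive Fˣ) (Additive Fˣ)) ⧸
    Submodule.span ℤ (SteinbergSet F)

/-- The symbol `{f, g}` in `K₂(F)`. -/
def symbol {F : Type*} [Field F] (f g : Fˣ) : K2 F :=
  Submodule.Quotient.mk (Additive.ofMul f ⊗ₜ[ℤ] Additive.ofMul g)

/-- The degree of a divisor `D` on the curve: `∑_P deg(P) · D(P)`,
where `deg P = [k(P) : k]`. -/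
def divDeg (k : Type*) [Field k] {Pt : Type*} (res : Pt → Type*)
    [∀ P, Field (res P)] [∀ P, Algebra k (res P)] (D : Pt →₀ ℤ) : ℤ :=
  ∑ᶠ P, (Module.finrank k (res P) : ℤ) * D P

/-- Axioms for a regular, irreducible curve `C`, projective over a field `k`, with
`H⁰(C, O_C) = k`, presented through: its function field `F = k(C)`, its set `Pt` of
closed points, the residue fields `res P = k(P)`, the normalized valuations `ord P`,
the evaluation maps `ev P` (evaluation at `P` of functions regular at `P`), the
Riemann-Roch spaces `L D = H⁰(C, O_C(D))`, and the arithmetic genus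
`t = dim_k H¹(C, O_C)`, characterized by the Riemann-Roch relations. -/
structure IsProjCurve (k F : Type*) [Field k] [Field F] [Algebra k F]
    {Pt : Type*} (res : Pt → Type*) [∀ P, Field (res P)] [∀ P, Algebra k (res P)]
    (ord : Pt → F → ℤ) (ev : ∀ P, F → res P)
    (L : (Pt →₀ ℤ) → Submodule k F) (t : ℕ) : Prop where
  finiteDimensional_res : ∀ P, FiniteDimensional k (res P)
  ord_mul : ∀ P (f g : F), f ≠ 0 → g ≠ 0 → ord P (f * g) = ord P f + ord P g
  ord_add : ∀ P (f g : F), f ≠ 0 → g ≠ 0 → f + g ≠ 0 →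
      min (ord P f) (ord P g) ≤ ord P (f + g)
  ord_algebraMap : ∀ P (c : k), c ≠ 0 → ord P (algebraMap k F c) = 0
  ord_uniformizer : ∀ P, ∃ f : F, f ≠ 0 ∧ ord P f = 1
  ord_separates : ∀ P Q, (∀ f : F, ord P f = ord Q f) → P = Q
  support_finite : ∀ f : F, f ≠ 0 → {P | ord P f ≠ 0}.Finite
  degree_formula : ∀ f : F, f ≠ 0 →
      ∑ᶠ P, (Module.finrank k (res P) : ℤ) * ord P f = 0
  ev_zero : ∀ P, ev P 0 = 0
  ev_one : ∀ P, ev P 1 = 1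
  ev_add : ∀ P (f g : F), f ≠ 0 → g ≠ 0 → 0 ≤ ord P f → 0 ≤ ord P g →
      ev P (f + g) = ev P f + ev P g
  ev_mul : ∀ P (f g : F), f ≠ 0 → g ≠ 0 → 0 ≤ ord P f → 0 ≤ ord P g →
      ev P (f * g) = ev P f * ev P g
  ev_algebraMap : ∀ P (c : k), ev P (algebraMap k F c) = algebraMap k (res P) c
  ev_eq_zero_iff : ∀ P (f : F), f ≠ 0 → 0 ≤ ord P f → (ev P f = 0 ↔ 0 < ord P f)
  ev_surjective : ∀ P (y : res P), ∃ f : F, f ≠ 0 ∧ 0 ≤ ord P f ∧ ev P f = y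
  mem_L : ∀ (D : Pt →₀ ℤ) (f : F), f ∈ L D ↔ (f ≠ 0 → ∀ P, 0 ≤ D P + ord P f)
  finiteDimensional_L : ∀ D, FiniteDimensional k (L D)
  global_sections : ∀ f : F, f ∈ L 0 ↔ ∃ c : k, algebraMap k F c = f
  rr_ineq : ∀ D : Pt →₀ ℤ,
      divDeg k res D + 1 - t ≤ (Module.finrank k (L D) : ℤ)
  rr_eq : ∀ D : Pt →₀ ℤ, 2 * (t : ℤ) - 2 < divDeg k res D →
      (Module.finrank k (L D) : ℤ) = divDeg k res D + 1 - t

/-- `T` is the tame symbol `K₂(F) → ∐_{P} k(P)^*`: it is determined by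
`T_P({f,g}) = (-1)^{ord_P(f)·ord_P(g)} (f^{ord_P(g)} / g^{ord_P(f)})(P)`. -/
def IsTameSymbol {F : Type*} [Field F] {Pt : Type*} {res : Pt → Type*}
    [∀ P, Field (res P)]
    (ord : Pt → F → ℤ) (ev : ∀ P, F → res P)
    (T : K2 F →+ Π₀ P : Pt, Additive ((res P)ˣ)) : Prop :=
  ∀ (f g : Fˣ) (P : Pt),
    ((Additive.toMul (T (symbol f g) P) : (res P)ˣ) : res P) =
      ev P (((-1 : Fˣ) ^ (ord P (f : F) * ord P (g : F)) *
        f ^ (ord P (g : F)) * g ^ (-ord P (f : F)) : Fˣ) : F)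

section Aux

variable {k F : Type*} [Field k] [Field F] [Algebra k F]
    {Pt : Type*} {res : Pt → Type*} [∀ P, Field (res P)] [∀ P, Algebra k (res P)]

theorem divDeg_eq_sum {D : Pt →₀ ℤ} {s : Finset Pt} (hs : D.support ⊆ s) :
    divDeg k res D = ∑ P ∈ s, (Module.finrank k (res P) : ℤ) * D P := by
  refine finsum_eq_sum_of_support_subset _ ?_
  intro x hx
  simp only [Function.mem_support, ne_eq] at hx
  by_contra hxs
  have : D x = 0 := Finsupp.notMem_support_iff.mp (fun h => hxs (hs h))
  simp [this] at hx

theorem divDeg_add (D E : Pt →₀ ℤ) :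
    divDeg k res (D + E) = divDeg k res D + divDeg k res E := by
  classical
  rw [divDeg_eq_sum (s := D.support ∪ E.support) Finsupp.support_add,
    divDeg_eq_sum (s := D.support ∪ E.support) Finset.subset_union_left,
    divDeg_eq_sum (s := D.support ∪ E.support) Finset.subset_union_right,
    ← Finset.sum_add_distrib]
  refine Finset.sum_congr rfl fun P _ => by
    simp [Finsupp.add_apply, mul_add]

theorem divDeg_neg (D : Pt →₀ ℤ) : divDeg k res (-D) = -divDeg k res D := by
  have h : (-D).support = D.support := Finsupp.support_neg D
  rw [divDeg_eq_sum (s := D.support) (h ▸ le_refl _),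
    divDeg_eq_sum (s := D.support) (le_refl _), ← Finset.sum_neg_distrib]
  refine Finset.sum_congr rfl fun P _ => by simp

theorem divDeg_sub (D E : Pt →₀ ℤ) :
    divDeg k res (D - E) = divDeg k res D - divDeg k res E := by
  rw [sub_eq_add_neg, divDeg_add, divDeg_neg, sub_eq_add_neg]

theorem divDeg_nonneg {D : Pt →₀ ℤ} (hD : ∀ P, 0 ≤ D P) : 0 ≤ divDeg k res D := by
  rw [divDeg_eq_sum (le_refl D.support)]
  exact Finset.sum_nonneg fun P _ => mul_nonneg (by positivity) (hD P)

theorem divDeg_mono {D E : Pt →₀ ℤ} (h : ∀ P, D P ≤ E P) :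
    divDeg k res D ≤ divDeg k res E := by
  have h0 : 0 ≤ divDeg k res (E - D) := divDeg_nonneg (fun P => by
    simp only [Finsupp.sub_apply]; have := h P; omega)
  rw [divDeg_sub] at h0
  omega

theorem divDeg_single (P : Pt) (a : ℤ) :
    divDeg k res (Finsupp.single P a) = (Module.finrank k (res P) : ℤ) * a := by
  rw [divDeg_eq_sum (le_refl _)]
  rcases eq_or_ne a 0 with rfl | ha
  · simp
  · rw [Finsupp.support_single_ne_zero _ ha, Finset.sum_singleton, Finsupp.single_eq_same]

theorem divDeg_erase (O : Pt) (D : Pt →₀ ℤ) :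
    divDeg k res (D.erase O) = divDeg k res D - (Module.finrank k (res O) : ℤ) * D O := by
  have h : Finsupp.single O (D O) + D.erase O = D := Finsupp.single_add_erase O D
  have := divDeg_add (k := k) (res := res) (Finsupp.single O (D O)) (D.erase O)
  rw [h, divDeg_single] at this
  omega

theorem le_divDeg {D : Pt →₀ ℤ} (hD : ∀ P, 0 ≤ D P) {P : Pt} (hP : D P ≠ 0) :
    (Module.finrank k (res P) : ℤ) ≤ divDeg k res D := by
  rw [divDeg_eq_sum (le_refl _)]
  have hmem : P ∈ D.support := Finsupp.mem_support_iff.mpr hP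
  calc (Module.finrank k (res P) : ℤ) ≤ (Module.finrank k (res P) : ℤ) * D P := by
        have h1 : 1 ≤ D P := by have := hD P; omega
        nlinarith [(by positivity : (0:ℤ) ≤ (Module.finrank k (res P) : ℤ))]
    _ ≤ _ := Finset.single_le_sum (f := fun Q => (Module.finrank k (res Q) : ℤ) * D Q)
        (fun Q _ => mul_nonneg (by positivity) (hD Q)) hmem

end Aux

section Aux2

variable {k F : Type*} [Field k] [Field F] [Algebra k F]
    {Pt : Type*} {res : Pt → Type*} [∀ P, Field (res P)] [∀ P, Algebra k (res P)]
    {ord : Pt → F → ℤ} {ev : ∀ P, F → res P}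
    {L : (Pt →₀ ℤ) → Submodule k F} {t : ℕ}

namespace IsProjCurve

variable (hC : IsProjCurve k F res ord ev L t)

include hC

theorem ord_one' (P : Pt) : ord P (1 : F) = 0 := by
  have := hC.ord_mul P 1 1 one_ne_zero one_ne_zero
  simp at this
  omega

theorem ord_u_mul (f g : Fˣ) (P : Pt) :
    ord P ((f * g : Fˣ) : F) = ord P (f : F) + ord P (g : F) := by
  rw [Units.val_mul]
  exact hC.ord_mul P _ _ f.ne_zero g.ne_zero

theorem ord_u_inv (f : Fˣ) (P : Pt) :
    ord P ((f⁻¹ : Fˣ) : F) = - ord P (f : F) := by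
  have h := hC.ord_u_mul f f⁻¹ P
  rw [mul_inv_cancel, Units.val_one, hC.ord_one'] at h
  omega

/-- The divisor of a nonzero function. -/
noncomputable def divisor (f : Fˣ) : Pt →₀ ℤ :=
  Finsupp.ofSupportFinite (fun P => ord P (f : F)) (hC.support_finite _ f.ne_zero)

@[simp] theorem divisor_apply (f : Fˣ) (P : Pt) : hC.divisor f P = ord P (f : F) := by
  rfl

theorem divisor_mul (f g : Fˣ) : hC.divisor (f * g) = hC.divisor f + hC.divisor g := by
  ext P
  simp only [divisor_apply, Finsupp.add_apply]
  exact hC.ord_u_mul f g P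

theorem divisor_inv (f : Fˣ) : hC.divisor f⁻¹ = - hC.divisor f := by
  ext P
  simp only [divisor_apply, Finsupp.neg_apply]
  exact hC.ord_u_inv f P

theorem divDeg_divisor (f : Fˣ) : divDeg k res (hC.divisor f) = 0 := by
  have h := hC.degree_formula (f : F) f.ne_zero
  rw [divDeg]
  rw [finsum_congr (fun P => by rw [hC.divisor_apply])]
  exact h

theorem exists_unit_L {D : Pt →₀ ℤ} (hD : (t : ℤ) ≤ divDeg k res D) :
    ∃ h : Fˣ, (h : F) ∈ L D := by
  have h1 := hC.rr_ineq D
  have h2 : 1 ≤ (Module.finrank k (L D) : ℤ) := by omega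
  have h3 : L D ≠ ⊥ := by
    intro hbot
    rw [hbot] at h2
    simp [finrank_bot] at h2
  obtain ⟨x, hx, hx0⟩ := Submodule.exists_mem_ne_zero_of_ne_bot h3
  exact ⟨Units.mk0 x hx0, hx⟩

end IsProjCurve

/-- negative part of a divisor -/
noncomputable def negp {Pt : Type*} (D : Pt →₀ ℤ) : Pt →₀ ℤ :=
  D.mapRange (fun a => max (-a) 0) (by simp)

/-- absolute value of a divisor -/
noncomputable def absp {Pt : Type*} (D : Pt →₀ ℤ) : Pt →₀ ℤ :=
  D.mapRange (fun a => |a|) abs_zero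

@[simp] theorem negp_apply {Pt : Type*} (D : Pt →₀ ℤ) (P : Pt) :
    negp D P = max (-(D P)) 0 := Finsupp.mapRange_apply

@[simp] theorem absp_apply {Pt : Type*} (D : Pt →₀ ℤ) (P : Pt) :
    absp D P = |D P| := Finsupp.mapRange_apply

end Aux2

section Aux3

theorem int_abs_split (a : ℤ) : |a| = max (-a) 0 + max a 0 := by
  rcases le_total 0 a with h | h
  · rw [abs_of_nonneg h, max_eq_right (neg_nonpos.mpr h), max_eq_left h, zero_add]
  · rw [abs_of_nonpos h, max_eq_left (neg_nonneg.mpr h), max_eq_right h, add_zero]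

theorem int_key (a b e : ℤ) (he1 : e ≤ max (-a) 0) (he2 : e ≤ b) :
    |a + b| ≤ |a| - e + (b - e) := by
  have h1 : |a| - a = 2 * max (-a) 0 := by
    rcases le_total 0 a with h | h
    · rw [abs_of_nonneg h, max_eq_right (neg_nonpos.mpr h)]; ring
    · rw [abs_of_nonpos h, max_eq_left (neg_nonneg.mpr h)]; ring
  have h2 : 0 ≤ |a| + a := by have := neg_abs_le a; linarith
  refine abs_le.mpr ⟨by linarith, by linarith⟩

variable {k F : Type*} [Field k] [Field F] [Algebra k F]
    {Pt : Type*} {res : Pt → Type*} [∀ P, Field (res P)] [∀ P, Algebra k (res P)]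
    {ord : Pt → F → ℤ} {ev : ∀ P, F → res P}
    {L : (Pt →₀ ℤ) → Submodule k F} {t : ℕ}

namespace IsProjCurve

variable (hC : IsProjCurve k F res ord ev L t)

include hC

theorem degP_pos (P : Pt) : 0 < (Module.finrank k (res P) : ℤ) := by
  haveI := hC.finiteDimensional_res P
  exact_mod_cast Module.finrank_pos

/-- the measure: total degree of the divisor of `f` away from `O` -/
noncomputable def phi (O : Pt) (f : Fˣ) : ℤ :=
  divDeg k res (absp ((hC.divisor f).erase O))

theorem phi_nonneg (O : Pt) (f : Fˣ) : 0 ≤ hC.phi O f :=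
  divDeg_nonneg (fun P => by simp [absp_apply])

theorem phi_inv (O : Pt) (f : Fˣ) : hC.phi O f⁻¹ = hC.phi O f := by
  unfold phi
  congr 1
  ext Q
  by_cases hQ : Q = O
  · subst hQ; simp [Finsupp.erase_same]
  · simp only [absp_apply, Finsupp.erase_ne hQ, hC.divisor_inv, Finsupp.neg_apply, abs_neg]

/-- the support condition: away from `O`, the divisor of `f` is supported on points
of degree at most `t`. -/
def Hsupp (_hC : IsProjCurve k F res ord ev L t) (O : Pt) (f : Fˣ) : Prop :=
  ∀ Q, Q ≠ O → ord Q (f : F) ≠ 0 → (Module.finrank k (res Q) : ℤ) ≤ t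

theorem Hsupp_inv {O : Pt} {f : Fˣ} (hs : hC.Hsupp O f) : hC.Hsupp O f⁻¹ := by
  intro Q hQ hne
  refine hs Q hQ ?_
  rw [hC.ord_u_inv] at hne
  omega

/-- The key "move": multiply `f` by a function `h ∈ L((t + deg E) O - E)`. -/
theorem move (O : Pt) (hO : Module.finrank k (res O) = 1) (f : Fˣ)
    (E : Pt →₀ ℤ) (hE0 : ∀ Q, 0 ≤ E Q)
    (hEN : ∀ Q, E Q ≤ negp ((hC.divisor f).erase O) Q)
    (hE2t : divDeg k res E ≤ 2 * t) :
    ∃ h : Fˣ, (h : F) ∈ L (Finsupp.single O (3 * t : ℤ)) ∧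
      hC.phi O (f * h) ≤ hC.phi O f - divDeg k res E + t ∧
      (hC.Hsupp O f → hC.Hsupp O (f * h)) ∧
      ((∀ Q, negp ((hC.divisor f).erase O) Q ≤ E Q) →
        ∀ Q, Q ≠ O → 0 ≤ ord Q ((f * h : Fˣ) : F)) := by
  have hEO : E O = 0 := by
    have h1 := hEN O
    have h2 := hE0 O
    simp only [negp_apply, Finsupp.erase_same, neg_zero, max_self] at h1
    omega
  set nE := divDeg k res E with hnE
  have hnE0 : 0 ≤ nE := divDeg_nonneg hE0
  set D₀ : Pt →₀ ℤ := Finsupp.single O ((t : ℤ) + nE) - E with hD₀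
  have hdeg₀ : divDeg k res D₀ = t := by
    rw [hD₀, divDeg_sub, divDeg_single, hO, ← hnE]
    push_cast
    ring
  obtain ⟨h, hhL⟩ := hC.exists_unit_L (D := D₀) (by rw [hdeg₀])
  have hord : ∀ P, 0 ≤ D₀ P + ord P (h : F) :=
    fun P => ((hC.mem_L D₀ h).mp hhL) h.ne_zero P
  have hordO : -((t : ℤ) + nE) ≤ ord O (h : F) := by
    have h1 := hord O
    rw [hD₀] at h1
    simp only [Finsupp.sub_apply, Finsupp.single_eq_same, hEO] at h1
    omega
  have hordQ : ∀ Q, Q ≠ O → E Q ≤ ord Q (h : F) := by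
    intro Q hQ
    have h1 := hord Q
    rw [hD₀] at h1
    simp only [Finsupp.sub_apply, Finsupp.single_eq_of_ne' (Ne.symm hQ)] at h1
    omega
  have hh3t : (h : F) ∈ L (Finsupp.single O (3 * t : ℤ)) := by
    rw [hC.mem_L]
    intro _ P
    by_cases hP : P = O
    · subst hP
      rw [Finsupp.single_eq_same]
      omega
    · rw [Finsupp.single_eq_of_ne' (Ne.symm hP)]
      have h1 := hordQ P hP
      have h2 := hE0 P
      omega
  set Df := hC.divisor f with hDf
  set Dh := hC.divisor h with hDh
  have hDfh : hC.divisor (f * h) = Df + Dh := hC.divisor_mul f h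
  have hDh0 : divDeg k res Dh = 0 := hC.divDeg_divisor h
  have hDhQ : ∀ Q, Q ≠ O → E Q ≤ Dh Q := by
    intro Q hQ
    rw [hDh, hC.divisor_apply]
    exact hordQ Q hQ
  have hDhO : -((t : ℤ) + nE) ≤ Dh O := by
    rw [hDh, hC.divisor_apply]
    exact hordO
  set X : Pt →₀ ℤ := (Dh - E).erase O with hX
  have hX0 : ∀ Q, 0 ≤ X Q := by
    intro Q
    by_cases hQ : Q = O
    · subst hQ; rw [hX, Finsupp.erase_same]
    · rw [hX, Finsupp.erase_ne hQ, Finsupp.sub_apply]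
      have := hDhQ Q hQ
      omega
  have hXdeg : divDeg k res X ≤ t := by
    rw [hX, divDeg_erase, divDeg_sub, hDh0, hO]
    have h1 : (Dh - E) O = Dh O := by rw [Finsupp.sub_apply, hEO, sub_zero]
    rw [h1]
    push_cast
    linarith
  have hptwise : ∀ Q, absp ((Df + Dh).erase O) Q ≤ (absp (Df.erase O) - E + X) Q := by
    intro Q
    by_cases hQ : Q = O
    · subst hQ
      simp only [Finsupp.add_apply, Finsupp.sub_apply, absp_apply, Finsupp.erase_same,
        abs_zero, hEO, hX, sub_zero, add_zero]
      omega
    · have hE1 := hEN Q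
      rw [negp_apply, Finsupp.erase_ne hQ] at hE1
      have hE2 := hDhQ Q hQ
      simp only [Finsupp.add_apply, Finsupp.sub_apply, absp_apply, Finsupp.erase_ne hQ,
        hX]
      exact int_key (Df Q) (Dh Q) (E Q) hE1 hE2
  have hphi : hC.phi O (f * h) ≤ hC.phi O f - nE + t := by
    have hm := divDeg_mono (k := k) (res := res) hptwise
    rw [divDeg_add, divDeg_sub, ← hnE] at hm
    have hphi1 : hC.phi O (f * h) = divDeg k res (absp ((Df + Dh).erase O)) := by
      rw [phi, hDfh]
    have hphi2 : hC.phi O f = divDeg k res (absp (Df.erase O)) := rfl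
    rw [hphi1, hphi2]
    linarith
  refine ⟨h, hh3t, hphi, ?_, ?_⟩
  · intro hs Q hQ hne
    by_cases hf0 : ord Q (f : F) = 0
    · have hEQ : E Q = 0 := by
        have h1 := hEN Q
        rw [negp_apply, Finsupp.erase_ne hQ, hDf, hC.divisor_apply, hf0] at h1
        have h2 := hE0 Q
        simp only [neg_zero, max_self] at h1
        omega
      have hXQ : X Q ≠ 0 := by
        rw [hX, Finsupp.erase_ne hQ, Finsupp.sub_apply, hEQ, sub_zero, hDh,
          hC.divisor_apply]
        have h1 := hC.ord_u_mul f h Q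
        rw [hf0, zero_add] at h1
        omega
      have h2 := le_divDeg (k := k) (res := res) hX0 hXQ
      omega
    · exact hs Q hQ hf0
  · intro hEfull Q hQ
    have h1 : ord Q ((f * h : Fˣ) : F) = Df Q + Dh Q := by
      rw [hC.ord_u_mul, hDf, hDh, hC.divisor_apply, hC.divisor_apply]
    have h2 := hEfull Q
    rw [negp_apply, Finsupp.erase_ne hQ] at h2
    have h3 := hDhQ Q hQ
    have h4 : -(Df Q) ≤ max (-(Df Q)) 0 := le_max_left _ _
    omega

end IsProjCurve

end Aux3

section Aux4

variable {k F : Type*} [Field k] [Field F] [Algebra k F]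
    {Pt : Type*} {res : Pt → Type*} [∀ P, Field (res P)] [∀ P, Algebra k (res P)]
    {ord : Pt → F → ℤ} {ev : ∀ P, F → res P}
    {L : (Pt →₀ ℤ) → Submodule k F} {t : ℕ}

/-- Greedy extraction of a chunk of degree in `[t+1, 2t]` from an effective divisor
supported on points of degree at most `t`. -/
theorem chunk_lemma (t : ℕ)
    (hpos : ∀ Q : Pt, 1 ≤ (Module.finrank k (res Q) : ℤ)) :
    ∀ (n : ℕ) (D : Pt →₀ ℤ), divDeg k res D ≤ n → (∀ Q, 0 ≤ D Q) →
      (∀ Q, D Q ≠ 0 → (Module.finrank k (res Q) : ℤ) ≤ t) →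
      (t : ℤ) + 1 ≤ divDeg k res D →
      ∃ E : Pt →₀ ℤ, (∀ Q, 0 ≤ E Q) ∧ (∀ Q, E Q ≤ D Q) ∧
        (t : ℤ) + 1 ≤ divDeg k res E ∧ divDeg k res E ≤ 2 * t := by
  intro n
  induction n with
  | zero =>
    intro D hn _ _ h1
    omega
  | succ n IH =>
    intro D hn hD0 hdeg h1
    by_cases h2 : divDeg k res D ≤ 2 * t
    · exact ⟨D, hD0, fun Q => le_refl _, h1, h2⟩
    · have hex : ∃ P, D P ≠ 0 := by
        by_contra hc
        push_neg at hc
        have hD : D = 0 := Finsupp.ext fun P => hc P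
        rw [hD] at h1
        have : divDeg k res (0 : Pt →₀ ℤ) = 0 := by
          rw [divDeg_eq_sum (le_refl _)]
          simp
        omega
      obtain ⟨P, hP⟩ := hex
      have hP1 : 1 ≤ D P := by have := hD0 P; omega
      set D' : Pt →₀ ℤ := D - Finsupp.single P 1 with hD'
      have hD'0 : ∀ Q, 0 ≤ D' Q := by
        intro Q
        rw [hD', Finsupp.sub_apply]
        by_cases hQ : Q = P
        · subst hQ; rw [Finsupp.single_eq_same]; omega
        · rw [Finsupp.single_eq_of_ne' (Ne.symm hQ)]; have := hD0 Q; omega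
      have hD'le : ∀ Q, D' Q ≤ D Q := by
        intro Q
        rw [hD', Finsupp.sub_apply]
        by_cases hQ : Q = P
        · subst hQ; rw [Finsupp.single_eq_same]; omega
        · rw [Finsupp.single_eq_of_ne' (Ne.symm hQ)]; omega
      have hdegP : (Module.finrank k (res P) : ℤ) ≤ t := hdeg P hP
      have hdd' : divDeg k res D' = divDeg k res D - (Module.finrank k (res P) : ℤ) := by
        rw [hD', divDeg_sub, divDeg_single, mul_one]
      have hposP := hpos P
      obtain ⟨E, hE0, hEle, hE1, hE2⟩ := IH D' (by omega)
        hD'0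
        (fun Q hQ => hdeg Q (by have h3 := hD'le Q; have h4 := hD'0 Q; omega))
        (by omega)
      exact ⟨E, hE0, fun Q => le_trans (hEle Q) (hD'le Q), hE1, hE2⟩

namespace IsProjCurve

variable (hC : IsProjCurve k F res ord ev L t)

include hC

theorem terminal (O : Pt) (hO : Module.finrank k (res O) = 1) (f : Fˣ)
    (hs : hC.Hsupp O f) (hphi : hC.phi O f ≤ 2 * t) :
    f ∈ Subgroup.closure {g : Fˣ | (g : F) ∈ L (Finsupp.single O (3 * t : ℤ))} := by
  set N := negp ((hC.divisor f).erase O) with hN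
  have hN0 : ∀ Q, 0 ≤ N Q := by intro Q; rw [hN, negp_apply]; omega
  have hNle : ∀ Q, N Q ≤ absp ((hC.divisor f).erase O) Q := by
    intro Q
    rw [hN, negp_apply, absp_apply]
    have := abs_nonneg ((hC.divisor f).erase O Q)
    have := neg_abs_le ((hC.divisor f).erase O Q)
    omega
  have hNdeg : divDeg k res N ≤ 2 * t := le_trans (divDeg_mono hNle) hphi
  have hNdeg0 : 0 ≤ divDeg k res N := divDeg_nonneg hN0
  obtain ⟨h, hh3t, hphi', _, hfull⟩ := hC.move O hO f N hN0 (fun Q => le_refl _) hNdeg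
  have hpos : ∀ Q, Q ≠ O → 0 ≤ ord Q ((f * h : Fˣ) : F) := hfull (fun Q => le_refl _)
  have hphifh : hC.phi O (f * h) ≤ 3 * t := by omega
  have hfO : -(3 * (t : ℤ)) ≤ ord O ((f * h : Fˣ) : F) := by
    have h0 : divDeg k res (hC.divisor (f * h)) = 0 := hC.divDeg_divisor _
    have he := divDeg_erase (k := k) (res := res) O (hC.divisor (f * h))
    rw [h0, hO] at he
    have hle : divDeg k res ((hC.divisor (f * h)).erase O) ≤ hC.phi O (f * h) := by
      refine divDeg_mono fun Q => ?_
      rw [absp_apply]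
      exact le_abs_self _
    have happ : hC.divisor (f * h) O = ord O ((f * h : Fˣ) : F) := hC.divisor_apply _ _
    push_cast at he
    omega
  have hmem : ((f * h : Fˣ) : F) ∈ L (Finsupp.single O (3 * t : ℤ)) := by
    rw [hC.mem_L]
    intro _ P
    by_cases hP : P = O
    · subst hP
      rw [Finsupp.single_eq_same]
      omega
    · rw [Finsupp.single_eq_of_ne' (Ne.symm hP)]
      have := hpos P hP
      omega
  have h1 : (f * h) ∈ Subgroup.closure {g : Fˣ | (g : F) ∈ L (Finsupp.single O (3 * t : ℤ))} :=
    Subgroup.subset_closure hmem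
  have h2 : h ∈ Subgroup.closure {g : Fˣ | (g : F) ∈ L (Finsupp.single O (3 * t : ℤ))} :=
    Subgroup.subset_closure hh3t
  have h3 : f = (f * h) * h⁻¹ := by group
  rw [h3]
  exact mul_mem h1 (inv_mem h2)

theorem main (O : Pt) (hO : Module.finrank k (res O) = 1) :
    ∀ n : ℕ, ∀ f : Fˣ, hC.phi O f ≤ n → hC.Hsupp O f →
      f ∈ Subgroup.closure {g : Fˣ | (g : F) ∈ L (Finsupp.single O (3 * t : ℤ))} := by
  intro n
  induction n using Nat.strong_induction_on with
  | _ n IH =>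
    intro f hn hs
    by_cases hsmall : hC.phi O f ≤ 2 * t
    · exact hC.terminal O hO f hs hsmall
    · push_neg at hsmall
      have hsplit : hC.phi O f = divDeg k res (negp ((hC.divisor f).erase O))
          + divDeg k res (negp ((hC.divisor f⁻¹).erase O)) := by
        rw [← divDeg_add]
        show divDeg k res (absp ((hC.divisor f).erase O)) = _
        congr 1
        ext Q
        rw [Finsupp.add_apply, absp_apply, negp_apply, negp_apply, hC.divisor_inv]
        by_cases hQ : Q = O
        · subst hQ
          simp [Finsupp.erase_same]
        · rw [Finsupp.erase_ne hQ, Finsupp.erase_ne hQ, Finsupp.neg_apply, neg_neg]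
          exact int_abs_split _
      obtain ⟨g, hg_inv, hgN⟩ : ∃ g : Fˣ, (g = f ∨ g = f⁻¹) ∧
          (t : ℤ) + 1 ≤ divDeg k res (negp ((hC.divisor g).erase O)) := by
        rcases le_or_gt ((t : ℤ) + 1) (divDeg k res (negp ((hC.divisor f).erase O))) with hc | hc
        · exact ⟨f, Or.inl rfl, hc⟩
        · exact ⟨f⁻¹, Or.inr rfl, by omega⟩
      have hphig : hC.phi O g = hC.phi O f := by
        rcases hg_inv with rfl | rfl
        · rfl
        · exact hC.phi_inv O f
      have hsg : hC.Hsupp O g := by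
        rcases hg_inv with rfl | rfl
        · exact hs
        · exact hC.Hsupp_inv hs
      set N := negp ((hC.divisor g).erase O) with hNdef
      have hN0 : ∀ Q, 0 ≤ N Q := by intro Q; rw [hNdef, negp_apply]; omega
      have hNabs : ∀ Q, N Q ≤ absp ((hC.divisor g).erase O) Q := by
        intro Q
        rw [hNdef, negp_apply, absp_apply]
        have := abs_nonneg ((hC.divisor g).erase O Q)
        have := neg_abs_le ((hC.divisor g).erase O Q)
        omega
      have hNn : divDeg k res N ≤ hC.phi O g := divDeg_mono hNabs
      obtain ⟨E, hE0, hEle, hE1, hE2⟩ :=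
        chunk_lemma (k := k) (res := res) t (fun Q => by have := hC.degP_pos Q; omega)
          (divDeg k res N).toNat N (Int.self_le_toNat _) hN0
          (by
            intro Q hQ
            rw [hNdef, negp_apply] at hQ
            by_cases hQO : Q = O
            · subst hQO; rw [Finsupp.erase_same] at hQ; omega
            · rw [Finsupp.erase_ne hQO] at hQ
              refine hsg Q hQO ?_
              rw [← hC.divisor_apply g Q]
              omega)
          hgN
      obtain ⟨h, hh3t, hphi', hsupp', _⟩ :=
        hC.move O hO g E hE0 (fun Q => (hNdef ▸ hEle Q)) hE2
      have hghlt : hC.phi O (g * h) ≤ hC.phi O f - 1 := by omega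
      have hgh0 : 0 ≤ hC.phi O (g * h) := hC.phi_nonneg O _
      have hghmem : (g * h) ∈
          Subgroup.closure {g : Fˣ | (g : F) ∈ L (Finsupp.single O (3 * t : ℤ))} := by
        refine IH (hC.phi O (g * h)).toNat (by omega) (g * h) (Int.self_le_toNat _)
          (hsupp' hsg)
      have hgmem : g ∈
          Subgroup.closure {g : Fˣ | (g : F) ∈ L (Finsupp.single O (3 * t : ℤ))} := by
        have h4 : g = (g * h) * h⁻¹ := by group
        rw [h4]
        exact mul_mem hghmem (inv_mem (Subgroup.subset_closure hh3t))
      rcases hg_inv with rfl | hgf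
      · exact hgmem
      · have := inv_mem hgmem
        rw [hgf] at this
        simpa using this

end IsProjCurve

end Aux4

/-- Lemma `3tlemma`(1).  Let `C` be a regular, irreducible curve,
projective over `k`, with function field `F`, arithmetic genus `t` and a `k`-rational
point `O`.  If `f ∈ F^*` has `|(f)| ⊆ C_{≤ t}`, then `f` lies in the subgroup of `F^*`
generated by the nonzero elements of `RR_{3t} = H⁰(C, O_C(3t(O)))`. -/
theorem statement8 (k F : Type*) [Field k] [Field F] [Algebra k F]
    {Pt : Type*} (res : Pt → Type*) [∀ P, Field (res P)] [∀ P, Algebra k (res P)]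
    (ord : Pt → F → ℤ) (ev : ∀ P, F → res P)
    (L : (Pt →₀ ℤ) → Submodule k F) (t : ℕ)
    (hC : IsProjCurve k F res ord ev L t)
    (O : Pt) (hO : Module.finrank k (res O) = 1)
    (f : Fˣ) (hf : ∀ P, ord P (f : F) ≠ 0 → Module.finrank k (res P) ≤ t) :
    f ∈ Subgroup.closure {g : Fˣ | (g : F) ∈ L (Finsupp.single O (3 * t : ℤ))} := by
  have hs : hC.Hsupp O f := by
    intro Q _ hne
    exact_mod_cast Nat.cast_le.mpr (hf Q hne)
  exact hC.main O hO (hC.phi O f).toNat f (Int.self_le_toNat _) hs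

end
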